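/- Under the finite-population sampling setup, if additionally 1/π_i ≤ γ for all i = 1, …, N (for some γ ≥ 1), then Cov(√N T) ⪯ γ J in the Loewner order, i.e., γ·(1/N)∑_{i=1}^N E[Y_i Y_iᵀ] − Cov(√N T) is positive semidefinite; consequently Cov(−H⁻¹ √N T) ⪯ γ H⁻¹ J H⁻¹. -/

import Mathlib

open MeasureTheory ProbabilityTheory Matrix

/-- Entrywise covariance matrix `Cov(Z) = E[(Z − E Z)(Z − E Z)ᵀ]` of a random vector. -/
noncomputable def covMatrix {Ω : Type*} [MeasurableSpace Ω] (μ : Measure Ω) {d : ℕ}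
    (Z : Ω → Fin d → ℝ) : Matrix (Fin d) (Fin d) ℝ :=
  Matrix.of fun a b =>
    ∫ ω, (Z ω a - ∫ ω', Z ω' a ∂μ) * (Z ω b - ∫ ω', Z ω' b ∂μ) ∂μ

/-- Second-moment (outer-product) matrix `E[Y Yᵀ]` of a random vector. -/
noncomputable def outerExpect {Ω : Type*} [MeasurableSpace Ω] (μ : Measure Ω) {d : ℕ}
    (Y : Ω → Fin d → ℝ) : Matrix (Fin d) (Fin d) ℝ :=
  Matrix.of fun a b => ∫ ω, Y ω a * Y ω b ∂μ

/- Auxiliary lemmas -/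

lemma integrable_mul_of_memL2 {Ω : Type*} [MeasurableSpace Ω] {μ : Measure Ω}
    {f g : Ω → ℝ} (hf : MemLp f 2 μ) (hg : MemLp g 2 μ) :
    Integrable (fun ω => f ω * g ω) μ := by
  have h : MemLp (g • f) 1 μ := hf.smul hg (hpqr :=
    ⟨by simp only [one_div, inv_one]; exact ENNReal.inv_two_add_inv_two⟩)
  rw [memLp_one_iff_integrable] at h
  exact h.congr (Filter.Eventually.of_forall fun ω => by
    simp [Pi.smul_apply, smul_eq_mul, mul_comm])

lemma quadForm_outerExpect {Ω : Type*} [MeasurableSpace Ω] (μ : Measure Ω) {d : ℕ}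
    (Y : Ω → Fin d → ℝ) (hY : ∀ a, MemLp (fun ω => Y ω a) 2 μ) (v : Fin d → ℝ) :
    v ⬝ᵥ (outerExpect μ Y).mulVec v = ∫ ω, (∑ a, v a * Y ω a) ^ 2 ∂μ := by
  have hint : ∀ a b : Fin d, Integrable (fun ω => v a * Y ω a * (v b * Y ω b)) μ := by
    intro a b
    have h := (integrable_mul_of_memL2 (hY a) (hY b)).const_mul (v a * v b)
    exact h.congr (Filter.Eventually.of_forall fun ω => by ring)
  have expand : ∀ ω : Ω, (∑ a, v a * Y ω a) ^ 2
      = ∑ a : Fin d, ∑ b : Fin d, v a * Y ω a * (v b * Y ω b) := by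
    intro ω; rw [sq, Finset.sum_mul_sum]
  calc v ⬝ᵥ (outerExpect μ Y).mulVec v
      = ∑ a : Fin d, ∑ b : Fin d, v a * ((∫ ω, Y ω a * Y ω b ∂μ) * v b) := by
        simp [dotProduct, Matrix.mulVec, outerExpect, Finset.mul_sum]
    _ = ∑ a : Fin d, ∑ b : Fin d, ∫ ω, v a * Y ω a * (v b * Y ω b) ∂μ := by
        refine Finset.sum_congr rfl fun a _ => Finset.sum_congr rfl fun b _ => ?_
        have h : (∫ ω, v a * Y ω a * (v b * Y ω b) ∂μ)
            = (v a * v b) * ∫ ω, Y ω a * Y ω b ∂μ := by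
          rw [← integral_const_mul]
          congr 1; funext ω; ring
        rw [h]; ring
    _ = ∫ ω, (∑ a, v a * Y ω a) ^ 2 ∂μ := by
        simp_rw [expand]
        rw [integral_finset_sum _ fun a _ => integrable_finset_sum _ fun b _ => hint a b]
        exact Finset.sum_congr rfl fun a _ =>
          (integral_finset_sum _ fun b _ => hint a b).symm

lemma integral_mul_of_condexp_const {Ω : Type*} {m m0 : MeasurableSpace Ω} (hm : m ≤ m0)
    (μ : Measure Ω) [IsProbabilityMeasure μ] {f g : Ω → ℝ} (c : ℝ)
    (hf : StronglyMeasurable[m] f) (hfg : Integrable (fun ω => f ω * g ω) μ)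
    (hg : Integrable g μ) (hc : μ[g|m] =ᵐ[μ] fun _ => c) :
    ∫ ω, f ω * g ω ∂μ = c * ∫ ω, f ω ∂μ := by
  have h1 : μ[f * g|m] =ᵐ[μ] f * μ[g|m] := condExp_mul_of_stronglyMeasurable_left hf hfg hg
  have h2 : μ[f * g|m] =ᵐ[μ] fun ω => f ω * c :=
    h1.trans (hc.mono fun ω hω => by simp only [Pi.mul_apply, hω])
  calc ∫ ω, f ω * g ω ∂μ = ∫ ω, (μ[f * g|m]) ω ∂μ := (integral_condExp hm).symm
    _ = ∫ ω, f ω * c ∂μ := integral_congr_ae h2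
    _ = c * ∫ ω, f ω ∂μ := by rw [integral_mul_const, mul_comm]

lemma dotProduct_finset_sum_mulVec {d : ℕ} {ι : Type*} (s : Finset ι)
    (M : ι → Matrix (Fin d) (Fin d) ℝ) (v : Fin d → ℝ) :
    v ⬝ᵥ (∑ i ∈ s, M i).mulVec v = ∑ i ∈ s, v ⬝ᵥ (M i).mulVec v := by
  classical
  induction s using Finset.induction_on with
  | empty => simp
  | insert a s h ih =>
      rw [Finset.sum_insert h, Finset.sum_insert h, Matrix.add_mulVec, dotProduct_add, ih]

lemma isHermitian_real {d : ℕ} (M : Matrix (Fin d) (Fin d) ℝ)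
    (h : ∀ a b, M b a = M a b) : M.IsHermitian :=
  Matrix.ext fun a b => by rw [Matrix.conjTranspose_apply, star_trivial, h]

lemma covMatrix_symm {Ω : Type*} [MeasurableSpace Ω] (μ : Measure Ω) {d : ℕ}
    (Z : Ω → Fin d → ℝ) (a b : Fin d) : covMatrix μ Z b a = covMatrix μ Z a b := by
  simp only [covMatrix, Matrix.of_apply]
  congr 1; funext ω; ring

lemma outerExpect_symm {Ω : Type*} [MeasurableSpace Ω] (μ : Measure Ω) {d : ℕ}
    (Y : Ω → Fin d → ℝ) (a b : Fin d) : outerExpect μ Y b a = outerExpect μ Y a b := by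
  simp only [outerExpect, Matrix.of_apply]
  congr 1; funext ω; ring

/-- under the finite-population sampling setup, if additionally `1/π i ≤ γ`
for all `i` (`γ ≥ 1`), then `Cov(√N T) ⪯ γ J` in the Loewner order, i.e.
`γ (1/N) ∑ i E[Y i Y iᵀ] − Cov(√N T)` is positive semidefinite; consequently
`Cov(−H⁻¹ √N T) ⪯ γ H⁻¹ J H⁻¹`. -/
theorem pseudoMLECovarianceLoewnerBound
    {Ω : Type*} (𝒜 : MeasurableSpace Ω) [mΩ : MeasurableSpace Ω]
    (μ : Measure Ω) [IsProbabilityMeasure μ]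
    (N d : ℕ) (hN : 0 < N)
    (Y : Fin N → Ω → Fin d → ℝ)
    (hYmeas : ∀ i, Measurable[mΩ] (Y i))
    (hYL2 : ∀ i, MemLp (Y i) 2 μ)
    (hYindep : iIndepFun Y μ)
    (hYmean : ∀ i a, ∫ ω, Y i ω a ∂μ = 0)
    (h𝒜 : 𝒜 = ⨆ k, MeasurableSpace.comap (Y k) inferInstance)
    (π : Fin N → ℝ) (hπ : ∀ i, π i ∈ Set.Ioc (0 : ℝ) 1)
    (π₂ : Fin N → Fin N → ℝ) (hπ₂ : ∀ i j, i ≠ j → π₂ i j ∈ Set.Icc (0 : ℝ) 1)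
    (δ : Fin N → Ω → ℝ)
    (hδmeas : ∀ i, Measurable[mΩ] (δ i))
    (hδval : ∀ i ω, δ i ω = 0 ∨ δ i ω = 1)
    (hδcond : ∀ i, μ[δ i | 𝒜] =ᵐ[μ] fun _ => π i)
    (hδδcond : ∀ i j, i ≠ j →
      μ[fun ω => δ i ω * δ j ω | 𝒜] =ᵐ[μ] fun _ => π₂ i j)
    (T : Ω → Fin d → ℝ)
    (hT : T = fun ω => (N : ℝ)⁻¹ • ∑ i, (δ i ω / π i) • Y i ω)
    (γ : ℝ) (hγ : 1 ≤ γ) (hπγ : ∀ i, (π i)⁻¹ ≤ γ)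
    (H : Matrix (Fin d) (Fin d) ℝ) (hH : H.IsSymm) (hHdet : IsUnit H.det) :
    (γ • ((N : ℝ)⁻¹ • ∑ i, outerExpect μ (Y i))
        - covMatrix μ (fun ω => Real.sqrt N • T ω)).PosSemidef ∧
      (γ • (H⁻¹ * ((N : ℝ)⁻¹ • ∑ i, outerExpect μ (Y i)) * H⁻¹)
        - covMatrix μ (fun ω => (-(H⁻¹)).mulVec (Real.sqrt N • T ω))).PosSemidef := by
  classical
  -- basic measurability facts
  have hm : 𝒜 ≤ mΩ := by
    rw [h𝒜]; exact iSup_le fun k => measurable_iff_comap_le.mp (hYmeas k)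
  have hY𝒜 : ∀ i, Measurable[𝒜] (Y i) := fun i =>
    measurable_iff_comap_le.mpr (by rw [h𝒜]; exact le_iSup (fun k => MeasurableSpace.comap (Y k) inferInstance) i)
  have hYaMeas : ∀ i a, Measurable (fun ω => Y i ω a) := fun i a =>
    (measurable_pi_apply a).comp (hYmeas i)
  have hYa𝒜 : ∀ i a, Measurable[𝒜] (fun ω => Y i ω a) := fun i a =>
    (measurable_pi_apply a).comp (hY𝒜 i)
  have hYa : ∀ i a, MemLp (fun ω => Y i ω a) 2 μ := fun i a =>
    (hYL2 i).mono ((hYaMeas i a).aestronglyMeasurable)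
      (Filter.Eventually.of_forall fun ω => norm_le_pi_norm (Y i ω) a)
  -- δ facts
  have hδbd : ∀ i ω, ‖δ i ω‖ ≤ 1 := fun i ω => by
    rcases hδval i ω with h | h <;> simp [h]
  have hδint : ∀ i, Integrable (δ i) μ := fun i =>
    (integrable_const (1 : ℝ)).mono' ((hδmeas i).aestronglyMeasurable)
      (Filter.Eventually.of_forall (hδbd i))
  have hδδint : ∀ i j, Integrable (fun ω => δ i ω * δ j ω) μ := fun i j =>
    (integrable_const (1 : ℝ)).mono' (((hδmeas i).mul (hδmeas j)).aestronglyMeasurable)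
      (Filter.Eventually.of_forall fun ω => by
        rw [norm_mul]
        exact mul_le_one₀ (hδbd i ω) (norm_nonneg _) (hδbd j ω))
  have hπ0 : ∀ i, π i ≠ 0 := fun i => ne_of_gt (hπ i).1
  have hδYint : ∀ i a, Integrable (fun ω => Y i ω a * δ i ω) μ := fun i a =>
    ((hYa i a).integrable one_le_two).norm.mono'
      (((hYaMeas i a).mul (hδmeas i)).aestronglyMeasurable)
      (Filter.Eventually.of_forall fun ω => by
        rw [norm_mul]
        exact mul_le_of_le_one_right (norm_nonneg _) (hδbd i ω))
  have hδYzero : ∀ i a, ∫ ω, Y i ω a * δ i ω ∂μ = 0 := fun i a => by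
    rw [integral_mul_of_condexp_const hm μ (π i) ((hYa𝒜 i a).stronglyMeasurable)
      (hδYint i a) (hδint i) (hδcond i), hYmean i a, mul_zero]
  -- the standardized HT score
  set Z : Ω → Fin d → ℝ := fun ω => Real.sqrt N • T ω with hZdef
  have hZcomp : ∀ a, (fun ω => Z ω a)
      = fun ω => (Real.sqrt N * (N : ℝ)⁻¹) * ∑ i, (π i)⁻¹ * (Y i ω a * δ i ω) := by
    intro a; funext ω
    simp only [hZdef, hT, Pi.smul_apply, Finset.sum_apply, smul_eq_mul]
    rw [← mul_assoc]
    congr 1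
    exact Finset.sum_congr rfl fun i _ => by rw [div_eq_mul_inv]; ring
  have hδY2 : ∀ i a, MemLp (fun ω => Y i ω a * δ i ω) 2 μ := fun i a =>
    (hYa i a).mono (((hYaMeas i a).mul (hδmeas i)).aestronglyMeasurable)
      (Filter.Eventually.of_forall fun ω => by
        rw [norm_mul]
        exact mul_le_of_le_one_right (norm_nonneg _) (hδbd i ω))
  have hZa : ∀ a, MemLp (fun ω => Z ω a) 2 μ := by
    intro a
    rw [hZcomp a]
    exact (memLp_finset_sum _ fun i _ => (hδY2 i a).const_mul ((π i)⁻¹)).const_mul _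
  have hZmean : ∀ a, ∫ ω, Z ω a ∂μ = 0 := by
    intro a
    rw [hZcomp a, integral_const_mul,
      integral_finset_sum _ fun i _ => (hδYint i a).const_mul ((π i)⁻¹)]
    simp_rw [integral_const_mul, hδYzero, mul_zero, Finset.sum_const_zero, mul_zero]
  have hcovouter : covMatrix μ Z = outerExpect μ Z := by
    refine Matrix.ext fun a b => ?_
    simp only [covMatrix, outerExpect, Matrix.of_apply, hZmean, sub_zero]
  -- key quadratic-form identity
  have key : ∀ v : Fin d → ℝ, v ⬝ᵥ (covMatrix μ Z).mulVec v
      = (N : ℝ)⁻¹ * ∑ i, (π i)⁻¹ * ∫ ω, (∑ a, v a * Y i ω a) ^ 2 ∂μ := by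
    intro v
    set X : Fin N → Ω → ℝ := fun i ω => ∑ a, v a * Y i ω a with hXdef
    have hXmeas : ∀ i, Measurable (X i) := fun i =>
      Finset.measurable_sum _ fun a _ => (hYaMeas i a).const_mul _
    have hX𝒜 : ∀ i, Measurable[𝒜] (X i) := fun i =>
      Finset.measurable_sum _ fun a _ => (hYa𝒜 i a).const_mul _
    have hXL2 : ∀ i, MemLp (X i) 2 μ := fun i =>
      memLp_finset_sum _ fun a _ => (hYa i a).const_mul _
    have hXmean : ∀ i, ∫ ω, X i ω ∂μ = 0 := by
      intro i
      simp only [hXdef]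
      rw [integral_finset_sum _ fun a _ => ((hYa i a).integrable one_le_two).const_mul _]
      simp_rw [integral_const_mul, hYmean, mul_zero, Finset.sum_const_zero]
    have hXsqint : ∀ i, Integrable (fun ω => X i ω ^ 2) μ := fun i => (hXL2 i).integrable_sq
    have hXXint : ∀ i j, Integrable (fun ω => X i ω * X j ω) μ := fun i j =>
      integrable_mul_of_memL2 (hXL2 i) (hXL2 j)
    have hXsqδint : ∀ i, Integrable (fun ω => X i ω ^ 2 * δ i ω) μ := fun i =>
      (hXsqint i).norm.mono'
        ((((hXmeas i).pow_const 2).mul (hδmeas i)).aestronglyMeasurable)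
        (Filter.Eventually.of_forall fun ω => by
          rw [norm_mul]
          exact mul_le_of_le_one_right (norm_nonneg _) (hδbd i ω))
    have hprod_int : ∀ i j,
        Integrable (fun ω => (X i ω * X j ω) * (δ i ω * δ j ω)) μ := fun i j =>
      (hXXint i j).norm.mono'
        ((((hXmeas i).mul (hXmeas j)).mul ((hδmeas i).mul (hδmeas j))).aestronglyMeasurable)
        (Filter.Eventually.of_forall fun ω => by
          rw [norm_mul]
          refine mul_le_of_le_one_right (norm_nonneg _) ?_
          rw [norm_mul]
          exact mul_le_one₀ (hδbd i ω) (norm_nonneg _) (hδbd j ω))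
    have hdiag : ∀ i, ∫ ω, X i ω ^ 2 * δ i ω ∂μ = π i * ∫ ω, X i ω ^ 2 ∂μ := fun i =>
      integral_mul_of_condexp_const hm μ (π i)
        (((hX𝒜 i).pow_const 2).stronglyMeasurable) (hXsqδint i) (hδint i) (hδcond i)
    have hoff : ∀ i j, i ≠ j →
        ∫ ω, (X i ω * X j ω) * (δ i ω * δ j ω) ∂μ = 0 := by
      intro i j hij
      rw [integral_mul_of_condexp_const (f := fun ω => X i ω * X j ω) hm μ (π₂ i j)
        (((hX𝒜 i).mul (hX𝒜 j)).stronglyMeasurable) (hprod_int i j) (hδδint i j)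
        (hδδcond i j hij)]
      have hφ : Measurable fun y : Fin d → ℝ => ∑ a, v a * y a :=
        Finset.measurable_sum _ fun a _ => (measurable_pi_apply a).const_mul _
      have hind : IndepFun (X i) (X j) μ := (hYindep.indepFun hij).comp hφ hφ
      have hmul : ∫ ω, X i ω * X j ω ∂μ = (∫ ω, X i ω ∂μ) * ∫ ω, X j ω ∂μ :=
        IndepFun.integral_mul_eq_mul_integral hind (hXmeas i).aestronglyMeasurable (hXmeas j).aestronglyMeasurable
      rw [hmul, hXmean i, zero_mul, mul_zero]
    -- rewrite quadratic form
    rw [hcovouter, quadForm_outerExpect μ Z hZa v]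
    have hsum : ∀ ω, ∑ a, v a * Z ω a
        = (Real.sqrt N * (N : ℝ)⁻¹) * ∑ i, (π i)⁻¹ * (X i ω * δ i ω) := by
      intro ω
      have hZc : ∀ a, Z ω a
          = (Real.sqrt N * (N : ℝ)⁻¹) * ∑ i, (π i)⁻¹ * (Y i ω a * δ i ω) := fun a =>
        congrFun (hZcomp a) ω
      calc ∑ a, v a * Z ω a
          = ∑ a, ∑ i, v a * ((Real.sqrt N * (N : ℝ)⁻¹) * ((π i)⁻¹ * (Y i ω a * δ i ω))) := by
            refine Finset.sum_congr rfl fun a _ => ?_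
            rw [hZc a, Finset.mul_sum, Finset.mul_sum]
        _ = ∑ i, ∑ a, v a * ((Real.sqrt N * (N : ℝ)⁻¹) * ((π i)⁻¹ * (Y i ω a * δ i ω))) :=
            Finset.sum_comm
        _ = (Real.sqrt N * (N : ℝ)⁻¹) * ∑ i, (π i)⁻¹ * (X i ω * δ i ω) := by
            rw [Finset.mul_sum]
            refine Finset.sum_congr rfl fun i _ => ?_
            simp only [hXdef, Finset.sum_mul, Finset.mul_sum]
            exact Finset.sum_congr rfl fun a _ => by ring
    simp_rw [hsum, mul_pow]
    rw [integral_const_mul]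
    have hNpos : (0 : ℝ) < N := by exact_mod_cast hN
    have hC2 : Real.sqrt N ^ 2 * ((N : ℝ)⁻¹) ^ 2 = (N : ℝ)⁻¹ := by
      rw [Real.sq_sqrt hNpos.le, pow_two, ← mul_assoc,
        mul_inv_cancel₀ hNpos.ne', one_mul]
    rw [hC2]
    congr 1
    -- expand the square of the weighted sum
    have hterm : ∀ i j, Integrable
        (fun ω => ((π i)⁻¹ * (X i ω * δ i ω)) * ((π j)⁻¹ * (X j ω * δ j ω))) μ := by
      intro i j
      have h := (hprod_int i j).const_mul ((π i)⁻¹ * (π j)⁻¹)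
      exact h.congr (Filter.Eventually.of_forall fun ω => by ring)
    have expand : ∀ ω, (∑ i, (π i)⁻¹ * (X i ω * δ i ω)) ^ 2
        = ∑ i, ∑ j, ((π i)⁻¹ * (X i ω * δ i ω)) * ((π j)⁻¹ * (X j ω * δ j ω)) := fun ω => by
      rw [sq, Finset.sum_mul_sum]
    simp_rw [expand]
    rw [integral_finset_sum _ fun i _ => integrable_finset_sum _ fun j _ => hterm i j]
    refine Finset.sum_congr rfl fun i _ => ?_
    rw [integral_finset_sum _ fun j _ => hterm i j]
    rw [Finset.sum_eq_single i]
    · have hfun : (fun ω => ((π i)⁻¹ * (X i ω * δ i ω)) * ((π i)⁻¹ * (X i ω * δ i ω)))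
          = fun ω => ((π i)⁻¹ * (π i)⁻¹) * (X i ω ^ 2 * δ i ω) := by
        funext ω
        rcases hδval i ω with h | h <;> rw [h] <;> ring
      rw [hfun, integral_const_mul, hdiag i, ← mul_assoc]
      have : (π i)⁻¹ * (π i)⁻¹ * π i = (π i)⁻¹ := by
        field_simp
      rw [this]
    · intro j _ hji
      have hfun : (fun ω => ((π i)⁻¹ * (X i ω * δ i ω)) * ((π j)⁻¹ * (X j ω * δ j ω)))
          = fun ω => ((π i)⁻¹ * (π j)⁻¹) * ((X i ω * X j ω) * (δ i ω * δ j ω)) := by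
        funext ω; ring
      rw [hfun, integral_const_mul, hoff i j (Ne.symm hji), mul_zero]
    · intro h
      exact absurd (Finset.mem_univ i) h
  -- quadratic form of J
  have hJquad : ∀ v : Fin d → ℝ,
      v ⬝ᵥ (((N : ℝ)⁻¹ • ∑ i, outerExpect μ (Y i)).mulVec v)
        = (N : ℝ)⁻¹ * ∑ i, ∫ ω, (∑ a, v a * Y i ω a) ^ 2 ∂μ := by
    intro v
    rw [smul_mulVec, dotProduct_smul, smul_eq_mul]
    congr 1
    rw [dotProduct_finset_sum_mulVec]
    exact Finset.sum_congr rfl fun i _ => quadForm_outerExpect μ (Y i) (hYa i) v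
  -- the central inequality
  have hquad : ∀ v : Fin d → ℝ, v ⬝ᵥ (covMatrix μ Z).mulVec v
      ≤ γ * (v ⬝ᵥ (((N : ℝ)⁻¹ • ∑ i, outerExpect μ (Y i)).mulVec v)) := by
    intro v
    rw [key v, hJquad v]
    have hE0 : ∀ i : Fin N, 0 ≤ ∫ ω, (∑ a, v a * Y i ω a) ^ 2 ∂μ := fun i =>
      integral_nonneg fun ω => sq_nonneg _
    have h1 : ∑ i, (π i)⁻¹ * ∫ ω, (∑ a, v a * Y i ω a) ^ 2 ∂μ
        ≤ ∑ i, γ * ∫ ω, (∑ a, v a * Y i ω a) ^ 2 ∂μ :=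
      Finset.sum_le_sum fun i _ => mul_le_mul_of_nonneg_right (hπγ i) (hE0 i)
    calc (N : ℝ)⁻¹ * ∑ i, (π i)⁻¹ * ∫ ω, (∑ a, v a * Y i ω a) ^ 2 ∂μ
        ≤ (N : ℝ)⁻¹ * ∑ i, γ * ∫ ω, (∑ a, v a * Y i ω a) ^ 2 ∂μ :=
          mul_le_mul_of_nonneg_left h1 (by positivity)
      _ = γ * ((N : ℝ)⁻¹ * ∑ i, ∫ ω, (∑ a, v a * Y i ω a) ^ 2 ∂μ) := by
          rw [← Finset.mul_sum]; ring
  -- Part 1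
  have hJsym : ∀ a b, ((N : ℝ)⁻¹ • ∑ i, outerExpect μ (Y i)) b a
      = ((N : ℝ)⁻¹ • ∑ i, outerExpect μ (Y i)) a b := by
    intro a b
    simp only [Matrix.smul_apply, Matrix.sum_apply, smul_eq_mul]
    congr 1
    exact Finset.sum_congr rfl fun i _ => outerExpect_symm μ (Y i) a b
  have part1 : (γ • ((N : ℝ)⁻¹ • ∑ i, outerExpect μ (Y i)) - covMatrix μ Z).PosSemidef := by
    refine Matrix.posSemidef_iff_dotProduct_mulVec.mpr ⟨?_, ?_⟩
    · refine isHermitian_real _ fun a b => ?_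
      simp only [Matrix.sub_apply, Matrix.smul_apply, Matrix.sum_apply, smul_eq_mul]
      have hs : ∑ i, outerExpect μ (Y i) b a = ∑ i, outerExpect μ (Y i) a b :=
        Finset.sum_congr rfl fun i _ => outerExpect_symm μ (Y i) a b
      rw [hs, covMatrix_symm μ Z a b]
    · intro x
      rw [star_trivial, sub_mulVec, dotProduct_sub, smul_mulVec, dotProduct_smul,
        smul_eq_mul]
      exact sub_nonneg.mpr (hquad x)
  refine ⟨part1, ?_⟩
  -- Part 2
  have hHinvT : (H⁻¹)ᵀ = H⁻¹ := by
    rw [Matrix.transpose_nonsing_inv, hH]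
  set V : Ω → Fin d → ℝ := fun ω => (-(H⁻¹)).mulVec (Z ω) with hVdef
  show (γ • (H⁻¹ * ((N : ℝ)⁻¹ • ∑ i, outerExpect μ (Y i)) * H⁻¹) - covMatrix μ V).PosSemidef
  have hVcomp : ∀ a, (fun ω => V ω a) = fun ω => ∑ b, (-(H⁻¹)) a b * Z ω b := by
    intro a; funext ω
    simp only [hVdef, Matrix.mulVec, dotProduct]
  have hVa : ∀ a, MemLp (fun ω => V ω a) 2 μ := by
    intro a
    rw [hVcomp a]
    exact memLp_finset_sum _ fun b _ => (hZa b).const_mul _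
  have hVmean : ∀ a, ∫ ω, V ω a ∂μ = 0 := by
    intro a
    rw [hVcomp a,
      integral_finset_sum _ fun b _ => ((hZa b).integrable one_le_two).const_mul _]
    simp_rw [integral_const_mul, hZmean, mul_zero, Finset.sum_const_zero]
  have hVcovouter : covMatrix μ V = outerExpect μ V := by
    refine Matrix.ext fun a b => ?_
    simp only [covMatrix, outerExpect, Matrix.of_apply, hVmean, sub_zero]
  refine Matrix.posSemidef_iff_dotProduct_mulVec.mpr ⟨?_, ?_⟩
  · refine isHermitian_real _ fun a b => ?_
    simp only [Matrix.sub_apply, Matrix.smul_apply, smul_eq_mul]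
    have hsym : (H⁻¹ * ((N : ℝ)⁻¹ • ∑ i, outerExpect μ (Y i)) * H⁻¹)ᵀ
        = H⁻¹ * ((N : ℝ)⁻¹ • ∑ i, outerExpect μ (Y i)) * H⁻¹ := by
      rw [Matrix.transpose_mul, Matrix.transpose_mul, hHinvT,
        show ((N : ℝ)⁻¹ • ∑ i, outerExpect μ (Y i))ᵀ
          = (N : ℝ)⁻¹ • ∑ i, outerExpect μ (Y i) from
          Matrix.ext fun a b => by rw [Matrix.transpose_apply]; exact hJsym a b,
        Matrix.mul_assoc]
    have h2 := congrFun (congrFun hsym a) b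
    rw [Matrix.transpose_apply] at h2
    rw [h2, covMatrix_symm μ V a b]
  · intro x
    rw [star_trivial, sub_mulVec, dotProduct_sub, smul_mulVec, dotProduct_smul,
      smul_eq_mul]
    set w : Fin d → ℝ := x ᵥ* (-(H⁻¹)) with hwdef
    have hxw : x ᵥ* H⁻¹ = H⁻¹ *ᵥ x := by
      conv_lhs => rw [← hHinvT]
      rw [Matrix.vecMul_transpose]
    -- covariance part
    have hcovpart : x ⬝ᵥ (covMatrix μ V).mulVec x = w ⬝ᵥ (covMatrix μ Z).mulVec w := by
      rw [hVcovouter, hcovouter, quadForm_outerExpect μ V hVa x,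
        quadForm_outerExpect μ Z hZa w]
      have hinner : ∀ ω, ∑ a, x a * V ω a = ∑ b, w b * Z ω b := by
        intro ω
        have hV : ∀ a, V ω a = ∑ b, (-(H⁻¹)) a b * Z ω b := fun a =>
          congrFun (hVcomp a) ω
        have hw : ∀ b, w b = ∑ a, x a * (-(H⁻¹)) a b := fun b => rfl
        simp only [hV, hw]
        simp_rw [Finset.mul_sum, Finset.sum_mul]
        rw [Finset.sum_comm]
        exact Finset.sum_congr rfl fun b _ => Finset.sum_congr rfl fun a _ => by ring
      simp_rw [hinner]
    -- algebra part
    have halg : x ⬝ᵥ (H⁻¹ * ((N : ℝ)⁻¹ • ∑ i, outerExpect μ (Y i)) * H⁻¹).mulVec x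
        = w ⬝ᵥ (((N : ℝ)⁻¹ • ∑ i, outerExpect μ (Y i)).mulVec w) := by
      have h1 : w = -(x ᵥ* H⁻¹) := by rw [hwdef, Matrix.vecMul_neg]
      calc x ⬝ᵥ (H⁻¹ * ((N : ℝ)⁻¹ • ∑ i, outerExpect μ (Y i)) * H⁻¹).mulVec x
          = (H⁻¹ *ᵥ x) ⬝ᵥ (((N : ℝ)⁻¹ • ∑ i, outerExpect μ (Y i)) *ᵥ (H⁻¹ *ᵥ x)) := by
            rw [← Matrix.mulVec_mulVec, ← Matrix.mulVec_mulVec, Matrix.dotProduct_mulVec, hxw]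
        _ = w ⬝ᵥ (((N : ℝ)⁻¹ • ∑ i, outerExpect μ (Y i)).mulVec w) := by
            rw [h1, hxw, Matrix.mulVec_neg, neg_dotProduct, dotProduct_neg, neg_neg]
    rw [hcovpart, halg]
    exact sub_nonneg.mpr (hquad w)
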